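/- arXiv:1504.03988 — 4 statements merged into one kernel-verified Lean document; each statement's English description precedes it below -/
import Mathlib

section
/- Let α_0 → α_1 → ⋯ → α_n be a finite path on the HB diagram 𝒟 of a subshift, with α_0 = b_{-k}...b_0, and let a_i be the last letter of α_i. Then for all i ≤ n, α_i = sig(b_{-k}...b_0 a_1 a_2 ... a_i). -/
open Set Filter Topology

/-- The natural extension of a one-sided subshift: bisequences all of whose
right tails lie in `Xp`. -/
def natExt {A : Type*} (Xp : Set (ℕ → A)) : Set (ℤ → A) :=
  {x | ∀ p : ℤ, (fun n : ℕ => x (p + n)) ∈ Xp}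

/-- The bisequence `x` ends at position `0` with the block `w`,
i.e. `w = x_{-(|w|-1)} ... x_0`. -/
def EndsWith {A : Type*} (x : ℤ → A) (w : List A) : Prop :=
  ∀ i : Fin w.length, x ((i.1 : ℤ) - ((w.length : ℤ) - 1)) = w.get i

/-- The block `w` occurs somewhere in the bisequence `x`. -/
def OccursZ {A : Type*} (w : List A) (x : ℤ → A) : Prop :=
  ∃ p : ℤ, ∀ i : Fin w.length, x (p + i.1) = w.get i

/-- The language of a set of bisequences. -/
def LangZ {A : Type*} (XZ : Set (ℤ → A)) (w : List A) : Prop :=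
  ∃ x ∈ XZ, OccursZ w x

/-- The block `w` occurs at position `p` in the one-sided sequence `a`. -/
def OccursAt {A : Type*} (w : List A) (a : ℕ → A) (p : ℕ) : Prop :=
  ∀ i : Fin w.length, a (p + i.1) = w.get i

/-- The block `w` occurs somewhere in the one-sided sequence `a`. -/
def OccursN {A : Type*} (w : List A) (a : ℕ → A) : Prop :=
  ∃ p : ℕ, OccursAt w a p

/-- The language of a set of one-sided sequences. -/
def LangN {A : Type*} (Xp : Set (ℕ → A)) (w : List A) : Prop :=
  ∃ a ∈ Xp, OccursN w a

/-- The follower set of the block `w` (read as `a_{-n} ... a_0`) in the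
two-sided set `XZ`: the right rays `b_0 b_1 ...` of points `b ∈ XZ`
with `b_{-n} ... b_0 = w`. -/
def fol {A : Type*} (XZ : Set (ℤ → A)) (w : List A) : Set (ℕ → A) :=
  {r | ∃ b ∈ XZ, EndsWith b w ∧ ∀ n : ℕ, r n = b (n : ℤ)}

/-- A block is significant if its follower set strictly decreases when its
first letter is prepended (i.e. `fol w ⊊ fol (w.tail)`). -/
def Significant {A : Type*} (XZ : Set (ℤ → A)) (w : List A) : Prop :=
  w ≠ [] ∧ fol XZ w ⊂ fol XZ w.tail

/-- `SigForm XZ w v` says `v = sig(w)`: `v` is the longest significant suffix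
of `w`. -/
def SigForm {A : Type*} (XZ : Set (ℤ → A)) (w v : List A) : Prop :=
  v <:+ w ∧ Significant XZ v ∧
    ∀ v' : List A, v' <:+ w → Significant XZ v' → v'.length ≤ v.length

/-- Arrow `u → v` of the Hofbauer–Buzzi diagram: both are significant blocks,
`u` extended by the last letter `a` of `v` is in the language, and
`v = sig(u a)`. -/
def Arrow {A : Type*} (XZ : Set (ℤ → A)) (u v : List A) : Prop :=
  Significant XZ u ∧ ∃ a : A, v.getLast? = some a ∧ LangZ XZ (u ++ [a]) ∧
    SigForm XZ (u ++ [a]) v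

/-- A (nonempty closed shift-invariant) one-sided subshift. -/
def IsSubshift {A : Type*} [TopologicalSpace A] (Xp : Set (ℕ → A)) : Prop :=
  Xp.Nonempty ∧ IsClosed Xp ∧ ∀ x ∈ Xp, (fun n => x (n + 1)) ∈ Xp

/-- The complexity function of a one-sided sequence. -/
noncomputable def Complexity {A : Type*} (u : ℕ → A) (n : ℕ) : ℕ :=
  Set.ncard {w : List A | w.length = n ∧ OccursN w u}

/-- The orbit closure of `u` under the shift, described combinatorially:
all sequences each of whose blocks occurs in `u`. -/
def OrbitClosure {A : Type*} (u : ℕ → A) : Set (ℕ → A) :=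
  {x | ∀ w : List A, OccursN w x → OccursN w u}

open Fin.NatCast in
/-- The Prouhet–Thue–Morse sequence: parity of the binary digit sum. -/
def morse (n : ℕ) : Fin 2 := (((Nat.digits 2 n).sum : ℕ) : Fin 2)

lemma natExt_shift {A : Type*} {Xp : Set (ℕ → A)} {x : ℤ → A} (hx : x ∈ natExt Xp)
    (k : ℤ) : (fun p => x (p + k)) ∈ natExt Xp := by
  intro p
  have h := hx (p + k)
  have he : (fun n : ℕ => x (p + n + k)) = fun n : ℕ => x (p + k + n) := by
    funext n; ring_nf
  exact he ▸ h

lemma endsWith_of_suffix {A : Type*} {x : ℤ → A} {s s' : List A}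
    (h : s' <:+ s) (hx : EndsWith x s) : EndsWith x s' := by
  obtain ⟨t, rfl⟩ := h
  intro j
  have hlt : t.length + j.1 < (t ++ s').length := by
    simp only [List.length_append]; omega
  have h1 := hx ⟨t.length + j.1, hlt⟩
  simp only [List.get_eq_getElem] at h1 ⊢
  rw [List.getElem_append_right (Nat.le_add_right _ _)] at h1
  simp only [Nat.add_sub_cancel_left] at h1
  rw [← h1]
  congr 1
  push_cast [List.length_append]
  ring

lemma mem_fol_append_iff {A : Type*} {Xp : Set (ℕ → A)} (s : List A) (a : A)
    (r : ℕ → A) :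
    r ∈ fol (natExt Xp) (s ++ [a]) ↔
      ∃ r' ∈ fol (natExt Xp) s, r' 1 = a ∧ ∀ n : ℕ, r n = r' (n + 1) := by
  constructor
  · rintro ⟨b, hb, he, hr⟩
    refine ⟨fun n => b ((n : ℤ) + (-1)), ⟨fun p => b (p + (-1)), natExt_shift hb (-1),
      ?_, fun n => rfl⟩, ?_, fun n => by
        show r n = b ((↑(n+1) : ℤ) + (-1))
        rw [hr n]
        congr 1
        push_cast
        ring⟩
    · intro j
      have hlt : j.1 < (s ++ [a]).length := by
        simp only [List.length_append, List.length_singleton]; omega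
      have h1 := he ⟨j.1, hlt⟩
      simp only [List.get_eq_getElem] at h1 ⊢
      rw [List.getElem_append_left j.2] at h1
      rw [← h1]
      congr 1
      simp only [List.length_append, List.length_singleton]
      push_cast
      try ring
    · have hlt : s.length < (s ++ [a]).length := by
        simp only [List.length_append, List.length_singleton]; omega
      have h1 := he ⟨s.length, hlt⟩
      simp only [List.get_eq_getElem] at h1
      rw [List.getElem_append_right (le_refl _)] at h1
      simp only [Nat.sub_self, List.getElem_singleton] at h1
      rw [← h1]
      congr 1
      simp only [List.length_append, List.length_singleton]
      push_cast
      try ring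
  · rintro ⟨r', ⟨c, hc, he, hr'⟩, h1, hrn⟩
    refine ⟨fun p => c (p + 1), natExt_shift hc 1, ?_, fun n => by
      show r n = c ((n:ℤ) + 1)
      rw [hrn n, hr' (n + 1)]
      norm_cast⟩
    intro j
    simp only [List.get_eq_getElem]
    by_cases hj : j.1 < s.length
    · have h2 := he ⟨j.1, hj⟩
      simp only [List.get_eq_getElem] at h2
      rw [List.getElem_append_left hj, ← h2]
      congr 1
      simp only [List.length_append, List.length_singleton]
      push_cast
      ring
    · have hj2 : j.1 = s.length := by
        have := j.2
        simp only [List.length_append, List.length_singleton] at this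
        omega
      rw [List.getElem_append_right (by omega)]
      simp only [hj2, Nat.sub_self, List.getElem_singleton]
      have harg : ((s.length : ℤ)) - (((s ++ [a]).length : ℤ) - 1) + 1 = 1 := by
        simp only [List.length_append, List.length_singleton]
        push_cast
        ring
      rw [harg, show (1:ℤ) = ((1:ℕ):ℤ) by norm_num, ← hr' 1]
      exact h1

lemma fol_mono {A : Type*} (XZ : Set (ℤ → A)) {s s' : List A} (h : s' <:+ s) :
    fol XZ s ⊆ fol XZ s' := by
  rintro r ⟨b, hb, he, hr⟩
  exact ⟨b, hb, endsWith_of_suffix h he, hr⟩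

lemma fol_eq_tail_of_not_sig {A : Type*} (XZ : Set (ℤ → A)) {s : List A}
    (hne : s ≠ []) (hns : ¬ Significant XZ s) : fol XZ s = fol XZ s.tail := by
  have hsub : fol XZ s ⊆ fol XZ s.tail := fol_mono XZ (List.tail_suffix s)
  by_contra hneq
  exact hns ⟨hne, ssubset_iff_subset_ne.mpr ⟨hsub, hneq⟩⟩

lemma fol_append_congr {A : Type*} {Xp : Set (ℕ → A)} {s t : List A} (a : A)
    (h : fol (natExt Xp) s = fol (natExt Xp) t) :
    fol (natExt Xp) (s ++ [a]) = fol (natExt Xp) (t ++ [a]) := by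
  ext r
  rw [mem_fol_append_iff, mem_fol_append_iff, h]

lemma suffix_of_suffix_le {A : Type*} {l1 l2 l3 : List A} (h1 : l1 <:+ l3)
    (h2 : l2 <:+ l3) (h : l1.length ≤ l2.length) : l1 <:+ l2 := by
  rw [← List.reverse_prefix] at h1 h2 ⊢
  exact List.prefix_of_prefix_length_le h1 h2 (by simpa using h)

lemma sig_step {A : Type*} {Xp : Set (ℕ → A)} {w u v : List A} {a : A}
    (hw : SigForm (natExt Xp) w u) (hv : SigForm (natExt Xp) (u ++ [a]) v) :
    SigForm (natExt Xp) (w ++ [a]) v := by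
  obtain ⟨huw, husig, humax⟩ := hw
  obtain ⟨hvu, hvsig, hvmax⟩ := hv
  obtain ⟨t, ht⟩ := huw
  have hsuf : u ++ [a] <:+ w ++ [a] := ⟨t, by rw [← List.append_assoc, ht]⟩
  refine ⟨hvu.trans hsuf, hvsig, ?_⟩
  intro v' hsuf' hsig'
  by_cases hlen : v'.length ≤ u.length + 1
  · refine hvmax v' (suffix_of_suffix_le hsuf' hsuf ?_) hsig'
    simpa using hlen
  · exfalso
    have hv'ne : v' ≠ [] := hsig'.1
    have hg := List.dropLast_append_getLast hv'ne
    obtain ⟨t1, ht1⟩ := hsuf'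
    rw [← hg, ← List.append_assoc] at ht1
    have hinj := List.append_inj' ht1 (by simp)
    have hlasta : v'.getLast hv'ne = a := by simpa using hinj.2
    have hsw : v'.dropLast <:+ w := ⟨t1, hinj.1⟩
    have hv' : v' = v'.dropLast ++ [a] := by rw [← hlasta, hg]
    have hvlen : v'.length = v'.dropLast.length + 1 := by
      conv_lhs => rw [hv']
      simp
    have hsne : v'.dropLast ≠ [] := by
      intro h
      rw [h] at hvlen
      simp at hvlen
      omega
    have hns : ¬ Significant (natExt Xp) v'.dropLast := by
      intro hsig
      have := humax _ hsw hsig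
      omega
    have heq : fol (natExt Xp) v'.dropLast = fol (natExt Xp) v'.dropLast.tail :=
      fol_eq_tail_of_not_sig _ hsne hns
    have heq2 : fol (natExt Xp) v' = fol (natExt Xp) v'.tail := by
      obtain ⟨x, s', hx⟩ := List.exists_cons_of_ne_nil hsne
      have htail : v'.tail = v'.dropLast.tail ++ [a] := by
        conv_lhs => rw [hv', hx]
        rw [hx]
        simp
      rw [htail]
      conv_lhs => rw [hv']
      exact fol_append_congr a heq
    exact (heq2 ▸ hsig'.2).ne rfl


/-- Let `α_0 → α_1 → ⋯ → α_n` be a finite path on the HB diagram,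
with `α_0 = b_{-k}...b_0`, and let `a_i` be the last letter of `α_i`. Then for
all `i ≤ n`, `α_i = sig(b_{-k}...b_0 a_1 a_2 ... a_i)`. -/
theorem stmt_7 {A : Type*} [Fintype A] [TopologicalSpace A] [DiscreteTopology A]
    (Xp : Set (ℕ → A)) (hX : IsSubshift Xp) (n : ℕ)
    (α : ℕ → List A) (a : ℕ → A)
    (h0 : Significant (natExt Xp) (α 0))
    (hpath : ∀ i : ℕ, i < n → Arrow (natExt Xp) (α i) (α (i + 1)))
    (hlast : ∀ i : ℕ, i ≤ n → (α i).getLast? = some (a i)) :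
    ∀ i : ℕ, i ≤ n →
      SigForm (natExt Xp) (α 0 ++ List.ofFn (fun j : Fin i => a (j.1 + 1)))
        (α i) := by
  intro i
  induction i with
  | zero =>
    intro _
    simp only [List.ofFn_zero, List.append_nil]
    exact ⟨List.suffix_refl _, h0, fun v' hs _ => hs.length_le⟩
  | succ i ih =>
    intro hi
    have hi' : i ≤ n := by omega
    obtain ⟨-, a', hga, -, hsf⟩ := hpath i (by omega)
    have ha' : a' = a (i + 1) := by
      have h2 := hlast (i + 1) hi
      rw [hga] at h2
      exact Option.some.inj h2
    rw [ha'] at hsf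
    have hstep := sig_step (ih hi') hsf
    have hofn : (List.ofFn fun j : Fin (i+1) => a (j.1 + 1)) =
        (List.ofFn fun j : Fin i => a (j.1 + 1)) ++ [a (i + 1)] := by
      rw [List.ofFn_succ']
      simp [List.concat_eq_append]
    rw [hofn, ← List.append_assoc]
    exact hstep
end

section
/- Every point of the natural extension X̃ of a one-sided subshift X⁺ is a limit of shifted sequences of the form σⁿ(0^∞.a⁽ⁿ⁾) with a⁽ⁿ⁾ ∈ X⁺; conversely, every limit point of such a sequence (x_n(a⁽ⁿ⁾))_{n≥0} with a⁽ⁿ⁾ ∈ X⁺ lies in X̃. Hence X̃ is exactly the set of limit points of all such sequences. -/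
open Set Filter Topology

/-- The bisequence `0^∞.a`: zeros at negative indices, `a` at nonnegative ones. -/
def zeroExt {A : Type*} [Zero A] (a : ℕ → A) : ℤ → A :=
  fun k => if 0 ≤ k then a k.toNat else 0

lemma shift_mem_aux {A : Type*} [TopologicalSpace A] {Xp : Set (ℕ → A)}
    (hX : IsSubshift Xp) (j : ℕ) {a : ℕ → A} (ha : a ∈ Xp) :
    (fun m => a (m + j)) ∈ Xp := by
  induction j with
  | zero => simpa using ha
  | succ j ih =>
    have h := hX.2.2 _ ih
    have e : (fun m => a (m + (j+1))) = fun n => (fun m => a (m + j)) (n + 1) := by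
      funext m; simp only []; ring_nf
    rw [e]; exact h

/-- Every point of `X̃` is a limit of the shifted sequences
`σⁿ(0^∞.a⁽ⁿ⁾)` with `a⁽ⁿ⁾ ∈ X⁺`, and conversely every cluster point of such a
sequence lies in `X̃`; hence `X̃` is exactly the set of such limit points. -/
theorem stmt_15 {A : Type*} [Fintype A] [TopologicalSpace A] [DiscreteTopology A]
    [Zero A] (Xp : Set (ℕ → A)) (hX : IsSubshift Xp) :
    (∀ x ∈ natExt Xp, ∃ a : ℕ → (ℕ → A), (∀ n, a n ∈ Xp) ∧
      Filter.Tendsto (fun n : ℕ => fun k : ℤ => zeroExt (a n) (k + n))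
        Filter.atTop (nhds x)) ∧
    (∀ a : ℕ → (ℕ → A), (∀ n, a n ∈ Xp) → ∀ x : ℤ → A,
      MapClusterPt x Filter.atTop
        (fun n : ℕ => fun k : ℤ => zeroExt (a n) (k + n)) →
      x ∈ natExt Xp) := by
  constructor
  · intro x hx
    refine ⟨fun n => fun m : ℕ => x (-(n:ℤ) + m), fun n => hx (-(n:ℤ)), ?_⟩
    rw [tendsto_pi_nhds]
    intro k
    apply tendsto_nhds_of_eventually_eq
    filter_upwards [eventually_ge_atTop (-k).toNat] with n hn
    have h0 : (0:ℤ) ≤ k + n := by omega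
    simp only [zeroExt, if_pos h0]
    congr 1
    omega
  · intro a ha x hx p
    have hT : ContinuousAt (fun y : ℤ → A => (fun m : ℕ => y (p + m))) x :=
      (continuous_pi fun m => continuous_apply _).continuousAt
    have hc := hx.continuousAt_comp hT
    have hev : ∀ᶠ n in atTop,
        ((fun y : ℤ → A => (fun m : ℕ => y (p + m))) ∘
          (fun n : ℕ => fun k : ℤ => zeroExt (a n) (k + n))) n ∈ Xp := by
      filter_upwards [eventually_ge_atTop (-p).toNat] with n hn
      have e : ((fun y : ℤ → A => (fun m : ℕ => y (p + m))) ∘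
          (fun n : ℕ => fun k : ℤ => zeroExt (a n) (k + n))) n
          = fun m => a n (m + (p + (n:ℤ)).toNat) := by
        funext m
        have h1 : (0:ℤ) ≤ p + m + n := by omega
        simp only [Function.comp, zeroExt, if_pos h1]
        congr 1
        omega
      rw [e]
      exact shift_mem_aux hX _ (ha n)
    have hle : Filter.map ((fun y : ℤ → A => (fun m : ℕ => y (p + m))) ∘
          (fun n : ℕ => fun k : ℤ => zeroExt (a n) (k + n))) atTop ≤ 𝓟 Xp :=
      le_principal_iff.2 (mem_map.2 hev)
    have hcl : (fun m : ℕ => x (p + m)) ∈ closure Xp :=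
      mem_closure_iff_clusterPt.2 (hc.clusterPt.mono hle)
    rwa [hX.2.1.closure_eq] at hcl
end

section
/- The Morse sequence contains no block of the form BBb, where B is a nonempty block and b is the first letter of B (i.e., it is overlap-free). -/
open Set Filter Topology

lemma morse_even (n : ℕ) : morse (2 * n) = morse n := by
  rcases Nat.eq_zero_or_pos n with h | h
  · simp [h]
  · unfold morse
    rw [Nat.digits_def' (by norm_num) (by omega)]
    have h1 : (2*n) % 2 = 0 := by omega
    have h2 : (2*n) / 2 = n := by omega
    rw [h1, h2]
    simp

lemma morse_odd (n : ℕ) : morse (2 * n + 1) = morse n + 1 := by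
  unfold morse
  rw [Nat.digits_def' (by norm_num) (by omega)]
  have h1 : (2*n+1) % 2 = 1 := by omega
  have h2 : (2*n+1) / 2 = n := by omega
  rw [h1, h2]
  push_cast [List.sum_cons]
  ext
  simp only [Fin.val_add, Fin.val_natCast, Fin.val_one]
  omega

lemma fin2_aa (a : Fin 2) : a + 1 + 1 = a := by revert a; decide

lemma fin2_ne (a : Fin 2) : a + 1 ≠ a := by revert a; decide

lemma no_three (n : ℕ) : morse n ≠ morse (n+1) ∨ morse (n+1) ≠ morse (n+2) := by
  rcases Nat.even_or_odd n with ⟨m, hm⟩ | ⟨m, hm⟩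
  · left
    have e1 : n = 2*m := by omega
    rw [e1, morse_even, morse_odd]
    exact fun h => fin2_ne _ h.symm
  · right
    have e1 : n + 1 = 2*(m+1) := by omega
    have e2 : n + 2 = 2*(m+1) + 1 := by omega
    rw [e2, e1, morse_even, morse_odd]
    exact fun h => fin2_ne _ h.symm

lemma key : ∀ k, 1 ≤ k → ∀ p, ¬ (∀ i, i ≤ k → morse (p + i) = morse (p + k + i)) := by
  intro k
  induction k using Nat.strong_induction_on with
  | _ k IH =>
  intro hk p H
  rcases Nat.even_or_odd k with ⟨m, hm⟩ | ⟨c, hc⟩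
  · -- k = 2m even
    have hm1 : 1 ≤ m := by omega
    rcases Nat.even_or_odd p with ⟨q, hq⟩ | ⟨q, hq⟩
    · refine IH m (by omega) hm1 q ?_
      intro i hi
      have h1 := H (2*i) (by omega)
      have e1 : p + 2*i = 2*(q+i) := by omega
      have e2 : p + k + 2*i = 2*(q+m+i) := by omega
      rw [e1, e2, morse_even, morse_even] at h1
      have e3 : q + m + i = q + i + m := by omega
      rw [e3] at h1
      convert h1 using 2
    · refine IH m (by omega) hm1 q ?_
      intro i hi
      have h1 := H (2*i) (by omega)
      have e1 : p + 2*i = 2*(q+i) + 1 := by omega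
      have e2 : p + k + 2*i = 2*(q+m+i) + 1 := by omega
      rw [e1, e2, morse_odd, morse_odd] at h1
      have h2 : morse (q+i) = morse (q+m+i) := add_right_cancel h1
      have e3 : q + m + i = q + i + m := by omega
      rw [e3] at h2
      convert h2 using 2
  · -- k = 2c+1 odd
    by_cases h1k : k = 1
    · subst h1k
      have h0 := H 0 (by omega)
      have h1 := H 1 (by omega)
      have e0 : p + 1 + 0 = p + (0 + 1) := by omega
      have e1 : p + 1 + 1 = p + (1 + 1) := by omega
      rw [e0] at h0
      rw [e1] at h1
      simp only [Nat.add_zero] at h0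
      rcases no_three p with hne | hne
      · exact hne (by rw [h0])
      · exact hne (by rw [← h1])
    · have hk3 : 3 ≤ k := by omega
      rcases Nat.even_or_odd p with ⟨q, hq⟩ | ⟨q, hq⟩
      · -- p = 2q
        have h0 := H 0 (by omega)
        have h1 := H 1 (by omega)
        have h2 := H 2 (by omega)
        have h3 := H 3 (by omega)
        have e0a : p + 0 = 2*q := by omega
        have e0b : p + k + 0 = 2*(q+c) + 1 := by omega
        have e1a : p + 1 = 2*q + 1 := by omega
        have e1b : p + k + 1 = 2*(q+c+1) := by omega
        have e2a : p + 2 = 2*(q+1) := by omega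
        have e2b : p + k + 2 = 2*(q+c+1) + 1 := by omega
        have e3a : p + 3 = 2*(q+1) + 1 := by omega
        have e3b : p + k + 3 = 2*(q+c+2) := by omega
        rw [e0a, e0b, morse_even, morse_odd] at h0
        rw [e1a, e1b, morse_odd, morse_even] at h1
        rw [e2a, e2b, morse_even, morse_odd] at h2
        rw [e3a, e3b, morse_odd, morse_even] at h3
        -- h0 : t q = t (q+c) + 1 ; h1 : t q + 1 = t (q+c+1)
        -- h2 : t (q+1) = t (q+c+1) + 1 ; h3 : t (q+1) + 1 = t (q+c+2)
        rcases no_three (q+c) with hne | hne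
        · apply hne
          have : morse (q+c) = morse q + 1 := by rw [h0, fin2_aa]
          rw [this, h1]
        · apply hne
          have : morse (q+c+1) = morse (q+1) + 1 := by rw [h2, fin2_aa]
          have e : q + c + 2 = q + c + 1 + 1 := by omega
          rw [e, ← h3, this]
      · -- p = 2q+1
        have h0 := H 0 (by omega)
        have h1 := H 1 (by omega)
        have h2 := H 2 (by omega)
        have h3 := H 3 (by omega)
        have e0a : p + 0 = 2*q + 1 := by omega
        have e0b : p + k + 0 = 2*(q+c+1) := by omega
        have e1a : p + 1 = 2*(q+1) := by omega
        have e1b : p + k + 1 = 2*(q+c+1) + 1 := by omega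
        have e2a : p + 2 = 2*(q+1) + 1 := by omega
        have e2b : p + k + 2 = 2*(q+c+2) := by omega
        have e3a : p + 3 = 2*(q+2) := by omega
        have e3b : p + k + 3 = 2*(q+c+2) + 1 := by omega
        rw [e0a, e0b, morse_odd, morse_even] at h0
        rw [e1a, e1b, morse_even, morse_odd] at h1
        rw [e2a, e2b, morse_odd, morse_even] at h2
        rw [e3a, e3b, morse_even, morse_odd] at h3
        -- h0 : t q + 1 = t (q+c+1) ; h1 : t (q+1) = t (q+c+1) + 1
        -- h2 : t (q+1) + 1 = t (q+c+2) ; h3 : t (q+2) = t (q+c+2) + 1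
        rcases no_three q with hne | hne
        · apply hne
          rw [h1, ← h0, fin2_aa]
        · apply hne
          rw [show q + 2 = q + 1 + 1 by omega, h3, ← h2, fin2_aa]

lemma get_shift {A : Type*} (B : List A) (h : B ≠ []) (i : ℕ) (hi : i ≤ B.length)
    (h1 : i < (B ++ B ++ [B.head h]).length)
    (h2 : B.length + i < (B ++ B ++ [B.head h]).length) :
    (B ++ B ++ [B.head h])[i]'h1 = (B ++ B ++ [B.head h])[B.length + i]'h2 := by
  have hk : 1 ≤ B.length := List.length_pos_iff.mpr h
  simp only [List.getElem_append, List.length_append, List.length_singleton]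
  split_ifs <;> try omega
  · congr 1; omega
  · simp only [show i - B.length = 0 by omega,
      show B.length + i - (B.length + B.length) = 0 by omega]
    simp [List.head_eq_getElem]

/-- The Morse sequence contains no block of the form `BBb`, where
`B` is a nonempty block and `b` is the first letter of `B` (overlap-freeness). -/
theorem stmt_17 :
    ∀ (B : List (Fin 2)) (h : B ≠ []) (p : ℕ),
      ¬ OccursAt (B ++ B ++ [B.head h]) morse p := by
  intro B h p occ
  have hk : 1 ≤ B.length := List.length_pos_iff.mpr h
  have hw : (B ++ B ++ [B.head h]).length = B.length + B.length + 1 := by simp; omega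
  refine key B.length hk p ?_
  intro i hi
  have g1 := occ ⟨i, by omega⟩
  have g2 := occ ⟨B.length + i, by omega⟩
  simp only [List.get_eq_getElem] at g1 g2
  rw [show p + B.length + i = p + (B.length + i) by omega, g1, g2]
  exact get_shift B h i hi _ _
end

section
/- Let a_{-n+1}...a_0 be a block of length n ≥ 2 in the language of the Morse minimal subshift X_ω⁺. Then a_{-n+1}...a_0 is a significant block of the natural extension X̃_ω if and only if both 0 a_{-n+2}...a_0 and 1 a_{-n+2}...a_0 are in the language of X_ω⁺. -/
open Set Filter Topology

noncomputable section
namespace M18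

lemma occursAt_ofFn {L : ℕ} (f : Fin L → Fin 2) (a : ℕ → Fin 2) (p : ℕ) :
    OccursAt (List.ofFn f) a p ↔ ∀ j : Fin L, a (p + j.1) = f j := by
  simp [OccursAt, List.length_ofFn, List.get_ofFn, Fin.forall_iff]

lemma morse_zero : morse 0 = 0 := by simp [morse]
lemma morse_two_mul (n : ℕ) : morse (2 * n) = morse n := by
  rcases Nat.eq_zero_or_pos n with h | h
  · subst h; rfl
  · unfold morse
    rw [Nat.digits_def' (by norm_num : (1:ℕ) < 2) (by omega)]
    simp [Nat.mul_div_cancel_left _ (by norm_num : (0:ℕ) < 2), Nat.mul_mod_right]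
lemma morse_two_mul_add_one (n : ℕ) : morse (2 * n + 1) = morse n + 1 := by
  unfold morse
  rw [Nat.digits_def' (by norm_num : (1:ℕ) < 2) (by omega)]
  have h1 : (2 * n + 1) % 2 = 1 := by omega
  have h2 : (2 * n + 1) / 2 = n := by omega
  rw [h1, h2]
  push_cast [List.sum_cons]
  ext; simp [Fin.val_add]; omega
lemma morse_one : morse 1 = 1 := by
  have := morse_two_mul_add_one 0; simpa [morse_zero] using this
lemma morse_three : morse 3 = 0 := by
  have := morse_two_mul_add_one 1; rw [show 2*1+1 = 3 by rfl, morse_one] at this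
  simpa using this

open Fin.NatCast in
lemma morse_decomp (x : ℕ) : morse x = morse (x / 2) + ((x % 2 : ℕ) : Fin 2) := by
  rcases Nat.even_or_odd x with ⟨m, hm⟩ | ⟨m, hm⟩
  · subst hm
    rw [show m + m = 2 * m by ring, morse_two_mul]
    simp [Nat.mul_div_cancel_left, Nat.mul_mod_right]
  · subst hm
    rw [morse_two_mul_add_one]
    have h1 : (2 * m + 1) / 2 = m := by omega
    have h2 : (2 * m + 1) % 2 = 1 := by omega
    rw [h1, h2]; rfl

lemma morse_pow_add : ∀ (k j : ℕ), j < 2 ^ k → morse (2 ^ k + j) = morse j + 1 := by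
  intro k
  induction k with
  | zero => intro j hj; interval_cases j; simp [morse_one, morse_zero]
  | succ k ih =>
    intro j hj
    rcases Nat.even_or_odd j with ⟨m, hm⟩ | ⟨m, hm⟩
    · have h1 : 2 ^ (k+1) + j = 2 * (2 ^ k + m) := by rw [hm]; ring
      have h2 : j = 2 * m := by omega
      rw [h1, morse_two_mul, ih m (by omega), h2, morse_two_mul]
    · have h1 : 2 ^ (k+1) + j = 2 * (2 ^ k + m) + 1 := by rw [hm]; ring
      have h2 : j = 2 * m + 1 := by omega
      rw [h1, morse_two_mul_add_one, ih m (by omega), h2, morse_two_mul_add_one]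
lemma morse_3pow_add : ∀ (k j : ℕ), j < 2 ^ k → morse (3 * 2 ^ k + j) = morse j := by
  intro k
  induction k with
  | zero => intro j hj; interval_cases j; simp [morse_three, morse_zero]
  | succ k ih =>
    intro j hj
    rcases Nat.even_or_odd j with ⟨m, hm⟩ | ⟨m, hm⟩
    · have h1 : 3 * 2 ^ (k+1) + j = 2 * (3 * 2 ^ k + m) := by rw [hm]; ring
      have h2 : j = 2 * m := by omega
      rw [h1, morse_two_mul, ih m (by omega), h2, morse_two_mul]
    · have h1 : 3 * 2 ^ (k+1) + j = 2 * (3 * 2 ^ k + m) + 1 := by rw [hm]; ring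
      have h2 : j = 2 * m + 1 := by omega
      rw [h1, morse_two_mul_add_one, ih m (by omega), h2, morse_two_mul_add_one]

lemma no_full_period : ∀ p, 1 ≤ p → ¬ (∀ n, morse (n + p) = morse n) := by
  intro p
  induction p using Nat.strong_induction_on with
  | _ p ih =>
    intro hp H
    rcases Nat.even_or_odd p with ⟨q, hq⟩ | ⟨q, hq⟩
    · -- p = 2q even
      have hq' : p = 2 * q := by omega
      have : ∀ n, morse (n + q) = morse n := by
        intro n
        have := H (2 * n)
        rw [hq'] at this
        rw [show 2*n + 2*q = 2*(n+q) by ring, morse_two_mul, morse_two_mul] at this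
        exact this
      exact ih q (by omega) (by omega) this
    · -- p = 2q+1 odd
      have hq' : p = 2 * q + 1 := by omega
      have key : ∀ n, morse n = morse (n + q) + 1 := by
        intro n
        have := H (2 * n)
        rw [hq', show 2*n + (2*q+1) = 2*(n+q)+1 by ring, morse_two_mul,
          morse_two_mul_add_one] at this
        exact this.symm
      rcases Nat.eq_zero_or_pos q with h0 | h0
      · have := key 0
        rw [h0] at this
        simp only [Nat.zero_add, Nat.add_zero] at this
        rw [morse_zero] at this
        exact absurd this (by decide)
      · -- 2q is a full period
        have h2q : ∀ n, morse (n + 2 * q) = morse n := by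
          intro n
          have k1 := key n
          have k2 := key (n + q)
          rw [show n + q + q = n + 2*q by ring] at k2
          rw [k2] at k1
          have : morse n = morse (n + 2*q) + 1 + 1 := k1
          have h11 : ∀ x : Fin 2, x + 1 + 1 = x := by decide
          rw [h11] at this
          exact this.symm
        -- combine periods p = 2q+1 and 2q : morse (n+1) = morse n
        have hconst : ∀ n, morse (n + 1) = morse n := by
          intro n
          have a1 : morse (n + 1 + 2 * q) = morse (n + 1) := h2q (n+1)
          have a2 : morse (n + (2 * q + 1)) = morse n := by rw [← hq']; exact H n
          rw [show n + (2*q+1) = n + 1 + 2*q by ring] at a2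
          rw [a1] at a2; exact a2
        have : morse 1 = morse 0 := hconst 0
        rw [morse_one, morse_zero] at this
        exact absurd this (by decide)

lemma no_eventual_period (p N : ℕ) (hp : 1 ≤ p)
    (H : ∀ n, N ≤ n → morse (n + p) = morse n) : False := by
  apply no_full_period p hp
  intro j
  obtain ⟨k, hk⟩ : ∃ k, N + j + p < 2 ^ k := ⟨N + j + p, Nat.lt_two_pow_self⟩
  have h1 : morse (2 ^ k + j) = morse j + 1 := morse_pow_add k j (by omega)
  have h2 : morse (2 ^ k + (j + p)) = morse (j + p) + 1 := morse_pow_add k (j + p) (by omega)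
  have h3 : morse (2 ^ k + j + p) = morse (2 ^ k + j) := H (2 ^ k + j) (by omega)
  rw [show 2 ^ k + j + p = 2 ^ k + (j + p) by ring, h2, h1] at h3
  exact add_right_cancel h3

abbrev Xp : Set (ℕ → Fin 2) := OrbitClosure morse
abbrev XZ : Set (ℤ → Fin 2) := natExt Xp

/-- `v` occurs at `p` and `r` continues from the last letter of that occurrence. -/
def Good (v : List (Fin 2)) (r : ℕ → Fin 2) (m p : ℕ) : Prop :=
  OccursAt v morse p ∧ ∀ k < m, morse (p + (v.length - 1) + k) = r k

lemma occursAt_shift (v : List (Fin 2)) (p M : ℕ) (h : OccursAt v morse p) :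
    ∃ q, M ≤ q ∧ OccursAt v morse q := by
  obtain ⟨k, hk⟩ : ∃ k, p + v.length + M < 2 ^ k := ⟨_, Nat.lt_two_pow_self⟩
  refine ⟨3 * 2 ^ k + p, by omega, fun i => ?_⟩
  have e : 3 * 2 ^ k + p + i.1 = 3 * 2 ^ k + (p + i.1) := by ring
  rw [e, morse_3pow_add k _ (by have := i.2; omega)]
  exact h i

lemma good_shift {v : List (Fin 2)} {r : ℕ → Fin 2} {m p : ℕ} (h : Good v r m p) (M : ℕ) :
    ∃ q, M ≤ q ∧ Good v r m q := by
  obtain ⟨k, hk⟩ : ∃ k, p + v.length + m + M < 2 ^ k := ⟨_, Nat.lt_two_pow_self⟩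
  refine ⟨3 * 2 ^ k + p, by omega, fun i => ?_, fun j hj => ?_⟩
  · have e : 3 * 2 ^ k + p + i.1 = 3 * 2 ^ k + (p + i.1) := by ring
    rw [e, morse_3pow_add k _ (by have := i.2; omega)]
    exact h.1 i
  · have e : 3 * 2 ^ k + p + (v.length - 1) + j = 3 * 2 ^ k + (p + (v.length - 1) + j) := by
      ring
    rw [e, morse_3pow_add k _ (by omega)]
    exact h.2 j hj

lemma exists_ext (v : List (Fin 2)) (hv : v ≠ []) (r : ℕ → Fin 2)
    (H : ∀ m, ∃ p, Good v r m p) :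
    ∃ b ∈ XZ, EndsWith b v ∧ ∀ n : ℕ, r n = b (n : ℤ) := by
  classical
  have hn1 : 1 ≤ v.length := List.length_pos_iff.2 hv
  have H2 : ∀ m, ∃ p, m ≤ p ∧ Good v r m p := by
    intro m; obtain ⟨p, hp⟩ := H m; exact good_shift hp m
  choose p hpge hp using H2
  set c : ℕ → ℤ → Fin 2 :=
    fun m z => morse (((p m : ℤ) + ((v.length - 1 : ℕ) : ℤ) + z).toNat) with hc
  have c_pos : ∀ (m : ℕ) (q : ℤ), 0 ≤ (p m : ℤ) + ((v.length - 1 : ℕ) : ℤ) + q →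
      ∀ i : ℕ, c m (q + i) = morse (((p m : ℤ) + ((v.length - 1:ℕ):ℤ) + q).toNat + i) := by
    intro m q hq i
    have e : ((p m : ℤ) + ((v.length - 1:ℕ):ℤ) + (q + i)).toNat
        = ((p m : ℤ) + ((v.length - 1:ℕ):ℤ) + q).toNat + i := by omega
    show morse _ = _
    rw [e]
  have c_v : ∀ (m : ℕ) (i : Fin v.length),
      c m ((i.1 : ℤ) - ((v.length : ℤ) - 1)) = v.get i := by
    intro m i
    have e : ((p m : ℤ) + ((v.length - 1:ℕ):ℤ) + ((i.1 : ℤ) - ((v.length : ℤ) - 1))).toNat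
        = p m + i.1 := by have := i.2; omega
    show morse _ = _
    rw [e]
    exact (hp m).1 i
  have c_r : ∀ (m k : ℕ), k < m → c m (k : ℤ) = r k := by
    intro m k hk
    have e : ((p m : ℤ) + ((v.length - 1:ℕ):ℤ) + (k : ℤ)).toNat
        = p m + (v.length - 1) + k := by omega
    show morse _ = _
    rw [e]
    exact (hp m).2 k hk
  -- ultrafilter limit
  let U : Ultrafilter ℕ := Ultrafilter.of Filter.atTop
  have hUat : ∀ s ∈ Filter.atTop (α := ℕ), s ∈ U := fun s hs => Ultrafilter.of_le _ hs
  set b : ℤ → Fin 2 := fun z => if {m | c m z = 1} ∈ U then 1 else 0 with hbdef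
  have hb : ∀ z, {m | c m z = b z} ∈ U := by
    intro z
    by_cases h : {m | c m z = 1} ∈ U
    · have : b z = 1 := by rw [hbdef]; simp only [if_pos h]
      rw [this]; exact h
    · have hbz : b z = 0 := by rw [hbdef]; simp only [if_neg h]
      rw [hbz]
      have hcompl : {m | c m z = 1}ᶜ ∈ U := Ultrafilter.compl_mem_iff_notMem.2 h
      refine Filter.mem_of_superset hcompl ?_
      intro m hm
      have h2 : ∀ x : Fin 2, x ≠ 1 → x = 0 := by decide
      exact h2 _ hm
  have hwin : ∀ (q : ℤ) (L : ℕ), ∃ m, L ≤ m ∧ q.natAbs ≤ m ∧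
      ∀ i < L, c m (q + i) = b (q + i) := by
    intro q L
    have E : ∀ᶠ m in (U : Filter ℕ), ∀ i < L, c m (q + i) = b (q + i) := by
      induction L with
      | zero => exact Filter.Eventually.of_forall (by intro m i hi; omega)
      | succ L ih =>
        refine (ih.and (hb (q + L))).mono ?_
        rintro m ⟨h1, h2⟩ i hi
        rcases Nat.lt_or_ge i L with h | h
        · exact h1 i h
        · have : i = L := by omega
          subst this; exact h2
    have E2 : ∀ᶠ m in (U : Filter ℕ), L ≤ m ∧ q.natAbs ≤ m := by
      have : {m : ℕ | L ≤ m ∧ q.natAbs ≤ m} ∈ Filter.atTop (α := ℕ) :=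
        Filter.mem_atTop_sets.2 ⟨max L q.natAbs, fun m hm => ⟨le_trans (le_max_left _ _) hm,
          le_trans (le_max_right _ _) hm⟩⟩
      exact hUat _ this
    obtain ⟨m, hm1, hm2⟩ := (E.and E2).exists
    exact ⟨m, hm2.1, hm2.2, hm1⟩
  have hblock : ∀ (q : ℤ) (L : ℕ), ∃ P : ℕ, ∀ i < L, morse (P + i) = b (q + i) := by
    intro q L
    obtain ⟨m, hm1, hm2, hm3⟩ := hwin q L
    have hpos : 0 ≤ (p m : ℤ) + ((v.length - 1:ℕ):ℤ) + q := by
      have := hpge m; omega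
    refine ⟨((p m : ℤ) + ((v.length - 1:ℕ):ℤ) + q).toNat, fun i hi => ?_⟩
    rw [← c_pos m q hpos i]
    exact hm3 i hi
  refine ⟨b, ?_, ?_, ?_⟩
  · -- b ∈ XZ
    intro t w' hw'
    obtain ⟨s, hs⟩ := hw'
    obtain ⟨P, hP⟩ := hblock (t + s) w'.length
    refine ⟨P, fun i => ?_⟩
    rw [hP i.1 i.2]
    have e : t + (s : ℤ) + (i.1 : ℤ) = t + ((s + i.1 : ℕ) : ℤ) := by push_cast; ring
    rw [e]
    exact hs i
  · -- EndsWith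
    intro i
    obtain ⟨m, hm⟩ := Filter.nonempty_of_mem (hb ((i.1 : ℤ) - ((v.length : ℤ) - 1)))
    have hcv := c_v m i
    simp only [Set.mem_setOf_eq] at hm
    rw [← hm, hcv]
  · -- ray
    intro k
    have hgt : {m : ℕ | k < m} ∈ U :=
      hUat _ (Filter.mem_atTop_sets.2 ⟨k+1, fun m hm => Nat.lt_of_lt_of_le (Nat.lt_succ_self k) hm⟩)
    obtain ⟨m, hm1, hm2⟩ := Filter.nonempty_of_mem (Filter.inter_mem (hb (k : ℤ)) hgt)
    rw [← hm1, c_r m k hm2]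

lemma block_occurs {b : ℤ → Fin 2} (hb : b ∈ XZ) {L : ℕ} (f : Fin L → Fin 2) (q : ℤ)
    (h : ∀ j : Fin L, b (q + j.1) = f j) : ∃ P : ℕ, ∀ j : Fin L, morse (P + j.1) = f j := by
  have hx : (fun k : ℕ => b (q + k)) ∈ Xp := hb q
  have hocc : OccursN (List.ofFn f) morse := by
    apply hx
    exact ⟨0, (occursAt_ofFn f _ 0).2 (by intro j; simpa using h j)⟩
  obtain ⟨P, hP⟩ := hocc
  exact ⟨P, (occursAt_ofFn f morse P).1 hP⟩

lemma good_of_mem_fol {v : List (Fin 2)} (hv : v ≠ []) {r : ℕ → Fin 2}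
    (hr : r ∈ fol XZ v) : ∀ m, ∃ q, Good v r m q := by
  obtain ⟨b, hbXZ, hbe, hbr⟩ := hr
  intro m
  have hn1 : 1 ≤ v.length := List.length_pos_iff.2 hv
  obtain ⟨P, hP⟩ := block_occurs hbXZ
    (fun j : Fin (v.length + m) => b ((j.1 : ℤ) - ((v.length : ℤ) - 1)))
    (1 - (v.length : ℤ))
    (by intro j; congr 1; ring)
  refine ⟨P, fun i => ?_, fun k hk => ?_⟩
  · have := hP ⟨i.1, by omega⟩
    simp only [] at this
    rw [this]
    exact hbe i
  · have := hP ⟨v.length - 1 + k, by omega⟩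
    simp only [] at this
    have e : ((v.length - 1 + k : ℕ) : ℤ) - ((v.length : ℤ) - 1) = (k : ℤ) := by omega
    rw [e] at this
    rw [show P + (v.length - 1) + k = P + (v.length - 1 + k) by ring, this, ← hbr k]

lemma mem_fol_of_good {v : List (Fin 2)} (hv : v ≠ []) {r : ℕ → Fin 2}
    (H : ∀ m, ∃ q, Good v r m q) : r ∈ fol XZ v := by
  obtain ⟨b, h1, h2, h3⟩ := exists_ext v hv r H
  exact ⟨b, h1, h2, h3⟩

lemma endsWith_tail {b : ℤ → Fin 2} {a : Fin 2} {t : List (Fin 2)}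
    (he : EndsWith b (a :: t)) : EndsWith b t := by
  intro i
  have hi : i.1 + 1 < (a :: t).length := by
    simp only [List.length_cons]
    omega
  have h2 := he ⟨i.1 + 1, hi⟩
  have e : ((⟨i.1 + 1, hi⟩ : Fin (a :: t).length).1 : ℤ) - (((a :: t).length : ℤ) - 1)
      = (i.1 : ℤ) - ((t.length : ℤ) - 1) := by simp only [List.length_cons]; push_cast; ring
  rw [e] at h2
  rw [h2]
  rfl

lemma fol_sub_tail (v : List (Fin 2)) : fol XZ v ⊆ fol XZ v.tail := by
  rcases v with _ | ⟨a, t⟩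
  · simp
  · rintro r ⟨b, hb, he, hr⟩
    exact ⟨b, hb, endsWith_tail he, hr⟩


def Fct (m : ℕ) : Set (List (Fin 2)) := {v | v.length = m ∧ OccursN v morse}
def cplx (m : ℕ) : ℕ := (Fct m).ncard

lemma fct_finite (m : ℕ) : (Fct m).Finite :=
  (List.finite_length_eq (Fin 2) m).subset (fun _ hv => hv.1)

lemma left_ext {v : List (Fin 2)} (h : OccursN v morse) :
    ∃ a : Fin 2, OccursN ((a :: v) : List (Fin 2)) morse := by
  obtain ⟨p, hp⟩ := h
  obtain ⟨q, hq1, hq2⟩ := occursAt_shift v p 1 hp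
  refine ⟨morse (q - 1), q - 1, fun i => ?_⟩
  rcases i with ⟨i, hi⟩
  match i, hi with
  | 0, hi => simp
  | (j+1), hi =>
    have : q - 1 + (j + 1) = q + j := by omega
    rw [this]
    exact hq2 ⟨j, by simpa [List.length_cons] using hi⟩

lemma cplx_zero : cplx 0 ≤ 1 := by
  have : Fct 0 ⊆ {([] : List (Fin 2))} := by
    intro v hv
    simp [List.length_eq_zero_iff.1 hv.1]
  calc cplx 0 ≤ ({([] : List (Fin 2))} : Set _).ncard :=
        Set.ncard_le_ncard this (Set.finite_singleton _)
    _ = 1 := Set.ncard_singleton _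

lemma cplx_succ_le (m : ℕ) : cplx (m + 1) ≤ 2 * cplx m := by
  classical
  have hfin : (Fct m).Finite := fct_finite m
  have key : ∀ v ∈ Fct (m+1), ∃ a t, v = a :: t ∧ t ∈ Fct m := by
    rintro v ⟨hlen, p, hocc⟩
    rcases v with _ | ⟨a, t⟩
    · simp at hlen
    · refine ⟨a, t, rfl, by simpa using hlen, p + 1, fun i => ?_⟩
      have := hocc ⟨i.1 + 1, by simp only [List.length_cons]; omega⟩
      rw [show p + 1 + i.1 = p + (i.1 + 1) by ring]
      exact this
  let f : ↥(Fct (m+1)) → Fin 2 × ↥(Fct m) := fun v =>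
    ⟨(key v.1 v.2).choose, ⟨(key v.1 v.2).choose_spec.choose,
      (key v.1 v.2).choose_spec.choose_spec.2⟩⟩
  have hinj : Function.Injective f := by
    intro v v' h
    have h1 := (key v.1 v.2).choose_spec.choose_spec.1
    have h2 := (key v'.1 v'.2).choose_spec.choose_spec.1
    obtain ⟨e1, e2⟩ := Prod.ext_iff.1 h
    apply Subtype.ext
    rw [h1, h2]
    have ea : (key v.1 v.2).choose = (key v'.1 v'.2).choose := e1
    have eb : (key v.1 v.2).choose_spec.choose = (key v'.1 v'.2).choose_spec.choose :=
      congrArg Subtype.val e2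
    exact congrArg₂ List.cons ea eb
  haveI := hfin.to_subtype
  have hle := Nat.card_le_card_of_injective f hinj
  rw [Nat.card_prod, Nat.card_coe_set_eq, Nat.card_coe_set_eq] at hle
  simpa [cplx, Nat.card_eq_fintype_card] using hle

lemma cplx_three : cplx 3 ≤ 8 := by
  have h3 : cplx 3 ≤ 2 * cplx 2 := by simpa using cplx_succ_le 2
  have h2 : cplx 2 ≤ 2 * cplx 1 := by simpa using cplx_succ_le 1
  have h1 : cplx 1 ≤ 2 * cplx 0 := by simpa using cplx_succ_le 0
  have h0 := cplx_zero
  omega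

lemma parity_morse (n q q' i : ℕ) (hpar : q % 2 = q' % 2)
    (hhalf : ∀ j < n / 2 + 1, morse (q / 2 + j) = morse (q' / 2 + j))
    (hi : i < n) : morse (q + i) = morse (q' + i) := by
  rw [morse_decomp (q + i), morse_decomp (q' + i)]
  have e1 : (q + i) / 2 = q / 2 + (q % 2 + i) / 2 := by omega
  have e2 : (q + i) % 2 = (q % 2 + i) % 2 := by omega
  have e3 : (q' + i) / 2 = q' / 2 + (q % 2 + i) / 2 := by omega
  have e4 : (q' + i) % 2 = (q % 2 + i) % 2 := by omega
  rw [e1, e2, e3, e4, hhalf _ (by omega)]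

lemma cplx_half (n : ℕ) : cplx n ≤ 2 * cplx (n / 2 + 1) := by
  classical
  have hfin : (Fct (n / 2 + 1)).Finite := fct_finite _
  have hP : ∀ v : ↥(Fct n), ∃ p, OccursAt v.1 morse p := fun v => v.2.2
  choose P hP2 using hP
  let f : ↥(Fct n) → Fin 2 × ↥(Fct (n / 2 + 1)) := fun v =>
    ⟨⟨P v % 2, by omega⟩,
     ⟨List.ofFn (fun j : Fin (n / 2 + 1) => morse (P v / 2 + j.1)),
      by simp, P v / 2, (occursAt_ofFn _ _ _).2 (fun j => rfl)⟩⟩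
  have hinj : Function.Injective f := by
    intro v v' h
    obtain ⟨e1, e2⟩ := Prod.ext_iff.1 h
    have hpar : P v % 2 = P v' % 2 := congrArg Fin.val e1
    have hlists : List.ofFn (fun j : Fin (n / 2 + 1) => morse (P v / 2 + j.1))
        = List.ofFn (fun j : Fin (n / 2 + 1) => morse (P v' / 2 + j.1)) :=
      congrArg Subtype.val e2
    have hhalf : ∀ j < n / 2 + 1, morse (P v / 2 + j) = morse (P v' / 2 + j) := by
      intro j hj
      have := congrFun (List.ofFn_inj.1 hlists) ⟨j, hj⟩
      simpa using this
    apply Subtype.ext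
    apply List.ext_get (by rw [v.2.1, v'.2.1])
    intro i hi1 hi2
    have hv := hP2 v ⟨i, hi1⟩
    have hv' := hP2 v' ⟨i, hi2⟩
    rw [← hv, ← hv']
    exact parity_morse n (P v) (P v') i hpar hhalf (by rw [v.2.1] at hi1; exact hi1)
  haveI := hfin.to_subtype
  have hle := Nat.card_le_card_of_injective f hinj
  rw [Nat.card_prod, Nat.card_coe_set_eq, Nat.card_coe_set_eq] at hle
  simpa [cplx, Nat.card_eq_fintype_card] using hle

lemma cplx_linear : ∀ n, 3 ≤ n → cplx n ≤ 8 * n - 16 := by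
  intro n
  induction n using Nat.strong_induction_on with
  | _ n ih =>
    intro hn
    rcases Nat.lt_or_ge n 4 with h4 | h4
    · have : n = 3 := by omega
      subst this
      have := cplx_three
      omega
    · have hm3 : 3 ≤ n / 2 + 1 := by omega
      have hmlt : n / 2 + 1 < n := by omega
      have := ih (n / 2 + 1) hmlt hm3
      have h2 := cplx_half n
      omega


def LSray (s : ℕ → Fin 2) : Prop :=
  ∀ m, OccursN ((0 : Fin 2) :: List.ofFn (fun i : Fin m => s i)) morse ∧
       OccursN ((1 : Fin 2) :: List.ofFn (fun i : Fin m => s i)) morse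

lemma occursN_tail {a : Fin 2} {t : List (Fin 2)} (h : OccursN (a :: t) morse) :
    OccursN t morse := by
  obtain ⟨p, hp⟩ := h
  refine ⟨p + 1, fun i => ?_⟩
  have := hp ⟨i.1 + 1, by simp only [List.length_cons]; omega⟩
  rw [show p + 1 + i.1 = p + (i.1 + 1) by ring]
  exact this

lemma cplx_step (m : ℕ) (s : Fin 9 → (ℕ → Fin 2)) (hLS : ∀ j, LSray (s j))
    (hdist : ∀ j j', j ≠ j' → ∃ k < m, s j k ≠ s j' k) :
    cplx m + 9 ≤ cplx (m + 1) := by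
  classical
  set pref : Fin 9 → List (Fin 2) := fun j => List.ofFn (fun i : Fin m => s j i) with hprefdef
  have hboth : ∀ (j : Fin 9) (x : Fin 2), (x :: pref j) ∈ Fct (m + 1) := by
    intro j x
    have h2 : ∀ x : Fin 2, x = 0 ∨ x = 1 := by decide
    refine ⟨by simp [hprefdef], ?_⟩
    rcases h2 x with h | h <;> rw [h]
    · exact (hLS j m).1
    · exact (hLS j m).2
  have hpref : ∀ j, pref j ∈ Fct m :=
    fun j => ⟨by simp [hprefdef], occursN_tail (hLS j m).1⟩
  have hext : ∀ v : ↥(Fct m), ∃ a : Fin 2, (a :: v.1) ∈ Fct (m + 1) := by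
    intro v
    obtain ⟨a, ha⟩ := left_ext v.2.2
    exact ⟨a, by simp [Fct, v.2.1], ha⟩
  choose A hA using hext
  let g : (↥(Fct m) ⊕ Fin 9) → ↥(Fct (m + 1)) :=
    Sum.elim (fun v => ⟨A v :: v.1, hA v⟩)
      (fun j => ⟨(A ⟨pref j, hpref j⟩ + 1) :: pref j, hboth j _⟩)
  have hinj : Function.Injective g := by
    rintro (v | j) (v' | j') h
    · have : A v :: v.1 = A v' :: v'.1 := congrArg Subtype.val h
      exact congrArg Sum.inl (Subtype.ext (List.cons.inj this).2)
    · exfalso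
      have hc : A v :: v.1 = (A ⟨pref j', hpref j'⟩ + 1) :: pref j' := congrArg Subtype.val h
      obtain ⟨hhd, htl⟩ := List.cons.inj hc
      have hv : v = ⟨pref j', hpref j'⟩ := Subtype.ext htl
      rw [hv] at hhd
      have : ∀ x : Fin 2, x ≠ x + 1 := by decide
      exact this _ hhd
    · exfalso
      have hc : (A ⟨pref j, hpref j⟩ + 1) :: pref j = A v' :: v'.1 := congrArg Subtype.val h
      obtain ⟨hhd, htl⟩ := List.cons.inj hc
      have hv : v' = ⟨pref j, hpref j⟩ := Subtype.ext htl.symm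
      rw [hv] at hhd
      have : ∀ x : Fin 2, x ≠ x + 1 := by decide
      exact this _ hhd.symm
    · have hc : (A ⟨pref j, hpref j⟩ + 1) :: pref j
          = (A ⟨pref j', hpref j'⟩ + 1) :: pref j' := congrArg Subtype.val h
      obtain ⟨hhd, htl⟩ := List.cons.inj hc
      congr
      by_contra hne
      obtain ⟨k, hk, hkne⟩ := hdist j j' hne
      apply hkne
      have := congrFun (List.ofFn_inj.1 htl) ⟨k, hk⟩
      simpa using this
  haveI := (fct_finite (m + 1)).to_subtype
  haveI := (fct_finite m).to_subtype
  have hle := Nat.card_le_card_of_injective g hinj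
  rw [Nat.card_sum, Nat.card_coe_set_eq, Nat.card_coe_set_eq] at hle
  simpa [cplx, Nat.card_eq_fintype_card] using hle

lemma no_nine (s : Fin 9 → ℕ → Fin 2) (hinj : Function.Injective s)
    (hLS : ∀ j, LSray (s j)) : False := by
  classical
  have hne : ∀ j j', j ≠ j' → ∃ k, s j k ≠ s j' k := by
    intro j j' hjj
    by_contra hcon
    push_neg at hcon
    exact hjj (hinj (funext hcon))
  let D : Fin 9 → Fin 9 → ℕ := fun j j' =>
    if h : j = j' then 0 else (hne j j' h).choose
  let M : ℕ := (Finset.univ.sup (fun jj : Fin 9 × Fin 9 => D jj.1 jj.2)) + 1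
  have hM : ∀ j j', j ≠ j' → ∃ k < M, s j k ≠ s j' k := by
    intro j j' hjj
    refine ⟨D j j', ?_, ?_⟩
    · have hle : D j j' ≤ Finset.univ.sup (fun jj : Fin 9 × Fin 9 => D jj.1 jj.2) :=
        Finset.le_sup (f := fun jj : Fin 9 × Fin 9 => D jj.1 jj.2) (Finset.mem_univ (j, j'))
      omega
    · show s j (D j j') ≠ s j' (D j j')
      simp only [D, dif_neg hjj]
      exact (hne j j' hjj).choose_spec
  have hstep : ∀ m, M ≤ m → cplx m + 9 ≤ cplx (m + 1) := by
    intro m hm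
    apply cplx_step m s hLS
    intro j j' hjj
    obtain ⟨k, hk, h⟩ := hM j j' hjj
    exact ⟨k, by omega, h⟩
  have hgrow : ∀ t, cplx M + 9 * t ≤ cplx (M + t) := by
    intro t
    induction t with
    | zero => simp
    | succ t ih =>
      have := hstep (M + t) (by omega)
      calc cplx M + 9 * (t + 1) = (cplx M + 9 * t) + 9 := by ring
        _ ≤ cplx (M + t) + 9 := by omega
        _ ≤ cplx (M + t + 1) := this
        _ = cplx (M + (t + 1)) := by ring_nf
  have hlin := cplx_linear (M + (8 * M + 200)) (by omega)
  have := hgrow (8 * M + 200)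
  omega


-- tails of morse are pairwise distinct
lemma tails_ne {t t' : ℕ} (h : t < t') :
    (fun k => morse (t + k)) ≠ (fun k => morse (t' + k)) := by
  intro he
  apply no_eventual_period (t' - t) t (by omega)
  intro n hn
  have h2 := congrFun he (n - t)
  rw [show t + (n - t) = n by omega] at h2
  rw [show t' + (n - t) = n + (t' - t) by omega] at h2
  exact h2.symm

lemma block_of_XZ {b : ℤ → Fin 2} (hb : b ∈ XZ) (v : List (Fin 2)) (q : ℤ)
    (h : ∀ i : Fin v.length, b (q + i.1) = v.get i) : OccursN v morse := by
  apply hb q v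
  exact ⟨0, fun i => by simpa using h i⟩

/-- the left-infinite continuation ray: `u` minus its last letter, then `r`. -/
def sray (u : List (Fin 2)) (r : ℕ → Fin 2) : ℕ → Fin 2 :=
  fun k => if h : k < u.length - 1 then u.get ⟨k, by omega⟩ else r (k - (u.length - 1))

lemma sray_r (u : List (Fin 2)) (r : ℕ → Fin 2) (k : ℕ) :
    sray u r (u.length - 1 + k) = r k := by
  unfold sray
  rw [dif_neg (by omega)]
  congr 1
  omega

lemma sray_inj {u : List (Fin 2)} {r r' : ℕ → Fin 2} (h : sray u r = sray u r') :
    r = r' := by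
  funext k
  have := congrFun h (u.length - 1 + k)
  rwa [sray_r, sray_r] at this

lemma occursAt_cons_intro {x : Fin 2} {L : ℕ} {f : Fin L → Fin 2} {aa : ℕ → Fin 2} {p : ℕ}
    (h0 : aa p = x) (h1 : ∀ j : Fin L, aa (p + (j.1 + 1)) = f j) :
    OccursAt (x :: List.ofFn f) aa p := by
  intro i
  rcases i with ⟨i, hi⟩
  match i, hi with
  | 0, hi => simpa using h0
  | (j+1), hi =>
    have hj : j < L := by simpa using hi
    show aa (p + (j + 1)) = (List.ofFn f).get ⟨j, by simpa using hi⟩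
    rw [List.get_ofFn]
    exact h1 ⟨j, hj⟩

lemma occursAt_cons_elim {x : Fin 2} {L : ℕ} {f : Fin L → Fin 2} {aa : ℕ → Fin 2} {p : ℕ}
    (h : OccursAt (x :: List.ofFn f) aa p) :
    aa p = x ∧ ∀ j : Fin L, aa (p + (j.1 + 1)) = f j := by
  constructor
  · have := h ⟨0, by simp⟩
    simpa using this
  · intro j
    have h2 := h ⟨j.1 + 1, by simp⟩
    have h3 : aa (p + (j.1 + 1)) = (List.ofFn f).get ⟨j.1, by simpa using j.2⟩ := h2
    rw [List.get_ofFn] at h3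
    exact h3

lemma good_sray {a : Fin 2} {u : List (Fin 2)} (hu : u ≠ []) {r : ℕ → Fin 2} {m p : ℕ}
    (hg : Good (a :: u) r (m + 1) p) :
    OccursAt (a :: List.ofFn (fun i : Fin (u.length - 1 + m) => sray u r i.1)) morse p := by
  have hu1 : 1 ≤ u.length := List.length_pos_iff.2 hu
  apply occursAt_cons_intro
  · have := hg.1 ⟨0, by simp⟩
    simpa using this
  · intro j
    rcases Nat.lt_or_ge j.1 (u.length - 1) with hlt | hge
    · have h2 := hg.1 ⟨j.1 + 1, by simp only [List.length_cons]; omega⟩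
      have h3 : morse (p + (j.1 + 1)) = u.get ⟨j.1, by omega⟩ := h2
      rw [h3]
      unfold sray
      rw [dif_pos hlt]
    · have hk : j.1 - (u.length - 1) < m + 1 := by have := j.2; omega
      have h2 := hg.2 (j.1 - (u.length - 1)) hk
      have e : p + ((a :: u).length - 1) + (j.1 - (u.length - 1)) = p + (j.1 + 1) := by
        simp only [List.length_cons]; omega
      rw [e] at h2
      rw [h2]
      unfold sray
      rw [dif_neg (by omega)]

lemma occN_prefix_cons {x : Fin 2} {L L' : ℕ} (hL : L' ≤ L) {f : ℕ → Fin 2}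
    (h : OccursN (x :: List.ofFn (fun i : Fin L => f i.1)) morse) :
    OccursN (x :: List.ofFn (fun i : Fin L' => f i.1)) morse := by
  obtain ⟨p, hp⟩ := h
  obtain ⟨h0, h1⟩ := occursAt_cons_elim hp
  exact ⟨p, occursAt_cons_intro h0 (fun j => h1 ⟨j.1, by omega⟩)⟩

lemma LS_build {a a' : Fin 2} (hne : a ≠ a') {u : List (Fin 2)} (hu : u ≠ []) {r : ℕ → Fin 2}
    (ha : ∀ m, ∃ p, Good (a :: u) r m p) (ha' : ∀ m, ∃ p, Good (a' :: u) r m p) :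
    LSray (sray u r) := by
  have key : ∀ (x : Fin 2), (∀ m, ∃ p, Good (x :: u) r m p) →
      ∀ m', OccursN (x :: List.ofFn (fun i : Fin m' => sray u r i.1)) morse := by
    intro x hx m'
    obtain ⟨p, hp⟩ := hx (m' + 1)
    exact occN_prefix_cons (by omega) ⟨p, good_sray hu hp⟩
  intro m'
  have hcase := (by decide :
    ∀ x y : Fin 2, x ≠ y → (x = 0 ∧ y = 1) ∨ (x = 1 ∧ y = 0)) a a' hne
  rcases hcase with ⟨h1, h2⟩ | ⟨h1, h2⟩
  · exact ⟨h1 ▸ key a ha m', h2 ▸ key a' ha' m'⟩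
  · exact ⟨h2 ▸ key a' ha' m', h1 ▸ key a ha m'⟩


end M18
end

open M18 in
/-- A block `a_{-n+1}...a_0` of length `n ≥ 2` in the language of
the Morse minimal subshift is a significant block of the natural extension
`X̃_ω` iff both `0 a_{-n+2}...a_0` and `1 a_{-n+2}...a_0` are in the language. -/
theorem stmt_18 (w : List (Fin 2)) (hlen : 2 ≤ w.length)
    (hw : OccursN w morse) :
    Significant (natExt (OrbitClosure morse)) w ↔
      (OccursN ((0 : Fin 2) :: w.tail) morse ∧
       OccursN ((1 : Fin 2) :: w.tail) morse) := by
  have hfin2 : ∀ x y : Fin 2, x ≠ y → (x = 0 ∧ y = 1) ∨ (x = 1 ∧ y = 0) := by decide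
  rcases w with _ | ⟨a, u⟩
  · simp at hlen
  have hu : u ≠ [] := by
    intro h; rw [h] at hlen; simp at hlen
  have hu1 : 1 ≤ u.length := List.length_pos_iff.2 hu
  have hcons : ((a :: u) : List (Fin 2)).tail = u := rfl
  constructor
  · -- Significant → both extensions
    rintro ⟨hne, hss⟩
    obtain ⟨r, hrt, hrw⟩ := Set.exists_of_ssubset hss
    rw [hcons] at hrt
    obtain ⟨b, hbXZ, hbe, hbr⟩ := hrt
    set α : Fin 2 := b (-(u.length : ℤ)) with hα
    have hblock : OccursN (α :: u) morse := by
      apply block_of_XZ hbXZ (α :: u) (-(u.length : ℤ))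
      intro i
      rcases i with ⟨i, hi⟩
      match i, hi with
      | 0, hi => simp [hα]
      | (j+1), hi =>
        have hj : j < u.length := by simpa using hi
        have h2 := hbe ⟨j, hj⟩
        have e : -(u.length : ℤ) + ((j : ℕ) + 1 : ℕ) = (j : ℤ) - ((u.length : ℤ) - 1) := by
          push_cast; ring
        rw [e]
        exact h2
    have hαa : α ≠ a := by
      intro heq
      apply hrw
      refine ⟨b, hbXZ, ?_, hbr⟩
      intro i
      rcases i with ⟨i, hi⟩
      match i, hi with
      | 0, hi =>
        have e : ((0:ℕ) : ℤ) - (((a :: u).length : ℤ) - 1) = -(u.length : ℤ) := by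
          simp only [List.length_cons]; push_cast; ring
        rw [e]
        exact heq
      | (j+1), hi =>
        have hj : j < u.length := by simpa using hi
        have h2 := hbe ⟨j, hj⟩
        have e : (((j:ℕ) + 1 : ℕ) : ℤ) - (((a :: u).length : ℤ) - 1)
            = (j : ℤ) - ((u.length : ℤ) - 1) := by
          simp only [List.length_cons]; push_cast; ring
        rw [e]
        exact h2
    rcases hfin2 α a hαa with ⟨h1, h2⟩ | ⟨h1, h2⟩
    · exact ⟨h1 ▸ hblock, h2 ▸ hw⟩
    · exact ⟨h2 ▸ hw, h1 ▸ hblock⟩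
  · -- both extensions → Significant
    rintro ⟨h0, h1⟩
    refine ⟨by simp, ?_⟩
    rw [ssubset_iff_subset_ne]
    refine ⟨fol_sub_tail _, ?_⟩
    intro heq
    rw [hcons] at heq
    -- fol u ⊆ fol (a :: u)
    have hsub : fol XZ u ⊆ fol XZ (a :: u) := by rw [← heq]
    set a' : Fin 2 := a + 1 with ha'
    have hane : a ≠ a' := by
      have : ∀ x : Fin 2, x ≠ x + 1 := by decide
      exact this a
    rw [hcons] at h0 h1
    have hocc' : OccursN (a' :: u) morse := by
      rcases hfin2 a a' hane with ⟨hx, hy⟩ | ⟨hx, hy⟩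
      · rw [hy]; exact h1
      · rw [hy]; exact h0
    -- nine strictly increasing occurrences of a' :: u
    obtain ⟨p0, hp0⟩ := hocc'
    have hstep : ∀ N, ∃ q, N ≤ q ∧ OccursAt (a' :: u) morse q :=
      fun N => occursAt_shift _ p0 N hp0
    choose F hF1 hF2 using hstep
    let q : ℕ → ℕ := fun j => Nat.rec (F 0) (fun _ prev => F (prev + 1)) j
    have hqocc : ∀ j, OccursAt (a' :: u) morse (q j) := by
      intro j
      cases j with
      | zero => exact hF2 0
      | succ j => exact hF2 _
    have hqmono : StrictMono q := by
      apply strictMono_nat_of_lt_succ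
      intro j
      have := hF1 (q j + 1)
      show q j < F (q j + 1)
      omega
    -- the rays
    let r : Fin 9 → ℕ → Fin 2 := fun j k => morse (q j.1 + u.length + k)
    have hrgood : ∀ j : Fin 9, ∀ m, ∃ p, Good (a' :: u) (r j) m p := by
      intro j m
      refine ⟨q j.1, hqocc j.1, fun k hk => ?_⟩
      show morse (q j.1 + ((a' :: u).length - 1) + k) = morse (q j.1 + u.length + k)
      have e : ((a' :: u) : List (Fin 2)).length - 1 = u.length := by
        simp only [List.length_cons]
        omega
      rw [e]
    have hrfolw : ∀ j : Fin 9, ∀ m, ∃ p, Good (a :: u) (r j) m p := by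
      intro j
      apply good_of_mem_fol (by simp)
      apply hsub
      have hsub2 : fol XZ (a' :: u) ⊆ fol XZ u := fol_sub_tail (a' :: u)
      exact hsub2 (mem_fol_of_good (by simp) (hrgood j))
    -- build nine distinct LS rays
    have hLS : ∀ j : Fin 9, LSray (sray u (r j)) :=
      fun j => LS_build hane hu (hrfolw j) (hrgood j)
    have hinj : Function.Injective (fun j : Fin 9 => sray u (r j)) := by
      intro j j' h
      by_contra hne2
      have hr : r j = r j' := sray_inj h
      have hqne : q j.1 ≠ q j'.1 := by
        intro hq
        exact hne2 (Fin.ext (hqmono.injective hq))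
      rcases Nat.lt_or_ge (q j.1) (q j'.1) with hlt | hge
      · exact tails_ne (t := q j.1 + u.length) (t' := q j'.1 + u.length) (by omega) hr
      · exact tails_ne (t := q j'.1 + u.length) (t' := q j.1 + u.length) (by omega) hr.symm
    exact no_nine _ hinj hLS
end
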